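/- Let A be an ℓ×n integer matrix, b an integer vector of dimension ℓ, and let Δ ≥ 1 be an upper bound on the absolute values of all subdeterminants of A. Suppose the system A x ≤ b has an integral solution z ∈ ℤ^n, and let r ∈ ℚ^n be any rational solution of A x ≤ b. Then there exists an integral solution z* ∈ ℤ^n of A x ≤ b such that every component of z* − r has absolute value at most nΔ. -/

import Mathlib

set_option maxHeartbeats 3200000
set_option synthInstance.maxHeartbeats 400000

open Matrix BigOperators Submodule Module

namespace CGST


/-- A rational number is integral. -/
def IsZ (q : ℚ) : Prop := ∃ m : ℤ, q = (m : ℚ)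

lemma IsZ.intCast (m : ℤ) : IsZ (m : ℚ) := ⟨m, rfl⟩

lemma IsZ.add {a b : ℚ} (ha : IsZ a) (hb : IsZ b) : IsZ (a + b) := by
  obtain ⟨m, rfl⟩ := ha; obtain ⟨k, rfl⟩ := hb; exact ⟨m + k, by push_cast; ring⟩

lemma IsZ.neg {a : ℚ} (ha : IsZ a) : IsZ (-a) := by
  obtain ⟨m, rfl⟩ := ha; exact ⟨-m, by push_cast; ring⟩

lemma IsZ.sub {a b : ℚ} (ha : IsZ a) (hb : IsZ b) : IsZ (a - b) := by
  simpa [sub_eq_add_neg] using ha.add hb.neg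

lemma IsZ.mul {a b : ℚ} (ha : IsZ a) (hb : IsZ b) : IsZ (a * b) := by
  obtain ⟨m, rfl⟩ := ha; obtain ⟨k, rfl⟩ := hb; exact ⟨m * k, by push_cast; ring⟩

lemma IsZ.zero : IsZ 0 := ⟨0, by norm_num⟩
lemma IsZ.one : IsZ 1 := ⟨1, by norm_num⟩

lemma IsZ.sum {ι : Type*} (s : Finset ι) (f : ι → ℚ) (h : ∀ i ∈ s, IsZ (f i)) :
    IsZ (∑ i ∈ s, f i) := by
  classical
  induction s using Finset.induction_on with
  | empty => simpa using IsZ.zero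
  | insert _ _ hx ih =>
      rw [Finset.sum_insert hx]
      exact (h _ (Finset.mem_insert_self _ _)).add
        (ih fun i hi => h i (Finset.mem_insert_of_mem hi))

def IsZVec {n : ℕ} (v : Fin n → ℚ) : Prop := ∀ i, IsZ (v i)

lemma isZ_det {k : ℕ} (M : Matrix (Fin k) (Fin k) ℚ) (h : ∀ i j, IsZ (M i j)) :
    IsZ M.det := by
  classical
  choose m hm using h
  have : M = (Int.castRingHom ℚ).mapMatrix (Matrix.of m) := by
    ext i j; simpa using hm i j
  refine ⟨(Matrix.of m).det, ?_⟩
  rw [this, ← RingHom.map_det]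
  rfl

/-- Vectors in the span of a set of vectors orthogonal to `y` are orthogonal to `y`. -/
lemma dot_eq_zero_of_mem_span {n : ℕ} (S : Set (Fin n → ℚ)) (y : Fin n → ℚ)
    (h : ∀ v ∈ S, v ⬝ᵥ y = 0) {x : Fin n → ℚ} (hx : x ∈ Submodule.span ℚ S) :
    x ⬝ᵥ y = 0 := by
  induction hx using Submodule.span_induction with
  | mem v hv => exact h v hv
  | zero => simp
  | add a b _ _ ha hb => simp [add_dotProduct, ha, hb]
  | smul c a _ ha => simp [smul_dotProduct, ha]



/-- For a subspace `W` of `ℚⁿ` one can select `finrank W` coordinates, all in the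
support of `W`, such that any element of `W` vanishing on them is zero. -/
lemma exists_coord_finset {n : ℕ} :
    ∀ (d : ℕ) (W : Submodule ℚ (Fin n → ℚ)), finrank ℚ W ≤ d →
    ∃ s : Finset (Fin n), s.card = finrank ℚ W ∧
      (∀ j ∈ s, ∃ w ∈ W, w j ≠ 0) ∧
      (∀ w ∈ W, (∀ j ∈ s, w j = 0) → w = 0) := by
  intro d
  induction d with
  | zero =>
      intro W hW
      refine ⟨∅, ?_, by simp, ?_⟩
      · have h0 : finrank ℚ W = 0 := Nat.le_zero.mp hW
        simp [h0]
      · have : W = ⊥ := Submodule.finrank_eq_zero.mp (Nat.le_zero.mp hW)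
        intro w hw _
        simpa [this] using hw
  | succ d ih =>
      intro W hW
      by_cases h0 : finrank ℚ W = 0
      · refine ⟨∅, by simpa using h0.symm, by simp, ?_⟩
        have : W = ⊥ := Submodule.finrank_eq_zero.mp h0
        intro w hw _
        simpa [this] using hw
      · -- pick a nonzero element and a coordinate where it is nonzero
        have hWne : W ≠ ⊥ := by
          intro hbot; exact h0 (by simp [hbot])
        obtain ⟨w₀, hw₀W, hw₀ne⟩ := Submodule.exists_mem_ne_zero_of_ne_bot hWne
        obtain ⟨j₀, hj₀⟩ : ∃ j, w₀ j ≠ 0 := by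
          by_contra hcon
          push_neg at hcon
          exact hw₀ne (funext hcon)
        set W' : Submodule ℚ (Fin n → ℚ) :=
          W ⊓ LinearMap.ker (LinearMap.proj j₀ : (Fin n → ℚ) →ₗ[ℚ] ℚ) with hW'
        have hW'le : W' ≤ W := inf_le_left
        -- finrank W' = finrank W - 1
        have hrk : finrank ℚ W' + 1 = finrank ℚ W := by
          set φ : W →ₗ[ℚ] ℚ := (LinearMap.proj j₀).comp W.subtype with hφ
          have hker : LinearMap.ker φ = Submodule.comap W.subtype W' := by
            ext x
            simp [hφ, hW', Submodule.mem_comap, x.2]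
          have hrange : LinearMap.range φ = ⊤ := by
            rw [eq_top_iff]
            rintro x -
            refine ⟨(x / (w₀ j₀)) • ⟨w₀, hw₀W⟩, ?_⟩
            simp only [hφ, LinearMap.comp_apply, LinearMap.map_smul]
            simp only [Submodule.coe_subtype, LinearMap.proj_apply, smul_eq_mul]
            field_simp
          have := LinearMap.finrank_range_add_finrank_ker φ
          rw [hrange, hker] at this
          have hequiv : finrank ℚ (Submodule.comap W.subtype W') = finrank ℚ W' :=
            (Submodule.comapSubtypeEquivOfLe hW'le).finrank_eq
          rw [hequiv] at this
          simpa [finrank_top, add_comm] using this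
        have hle' : finrank ℚ W' ≤ d := by omega
        obtain ⟨s', hcard', hsupp', hzero'⟩ := ih W' hle'
        have hj₀supp : ∀ w ∈ W', w j₀ = 0 := by
          intro w hw
          exact (Submodule.mem_inf.mp hw).2
        have hj₀s' : j₀ ∉ s' := by
          intro hmem
          obtain ⟨w, hwW', hwne⟩ := hsupp' j₀ hmem
          exact hwne (hj₀supp w hwW')
        refine ⟨insert j₀ s', ?_, ?_, ?_⟩
        · rw [Finset.card_insert_of_notMem hj₀s', hcard']; omega
        · intro j hj
          rcases Finset.mem_insert.mp hj with rfl | hj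
          · exact ⟨w₀, hw₀W, hj₀⟩
          · obtain ⟨w, hwW', hwne⟩ := hsupp' j hj
            exact ⟨w, hW'le hwW', hwne⟩
        · intro w hwW hvan
          have hwW' : w ∈ W' := by
            refine Submodule.mem_inf.mpr ⟨hwW, ?_⟩
            simpa using hvan j₀ (Finset.mem_insert_self _ _)
          exact hzero' w hwW' fun j hj => hvan j (Finset.mem_insert_of_mem hj)


lemma exists_coord_finset' {n : ℕ} (W : Submodule ℚ (Fin n → ℚ)) :
    ∃ s : Finset (Fin n), s.card = finrank ℚ W ∧
      (∀ j ∈ s, ∃ w ∈ W, w j ≠ 0) ∧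
      (∀ w ∈ W, (∀ j ∈ s, w j = 0) → w = 0) :=
  exists_coord_finset (finrank ℚ W) W le_rfl
lemma vecMul_eq_sum {k n : ℕ} (a : Fin k → ℚ) (M : Matrix (Fin k) (Fin n) ℚ) :
    Matrix.vecMul a M = ∑ i, a i • M i := by
  ext j
  simp [Matrix.vecMul, dotProduct, Finset.sum_apply]

lemma vecMul_submatrix_apply {k n : ℕ} (a : Fin k → ℚ) (M : Matrix (Fin k) (Fin n) ℚ)
    (c : Fin k → Fin n) (t : Fin k) :
    Matrix.vecMul a (M.submatrix id c) t = Matrix.vecMul a M (c t) := by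
  simp [Matrix.vecMul, dotProduct, Matrix.submatrix]

/-- A matrix with linearly independent rows has an invertible square column-submatrix. -/
lemma exists_invertible_submatrix {k n : ℕ} (M : Matrix (Fin k) (Fin n) ℚ)
    (h : LinearIndependent ℚ (fun i => M i)) :
    ∃ c : Fin k → Fin n, Function.Injective c ∧ (M.submatrix id c).det ≠ 0 := by
  classical
  set V := Submodule.span ℚ (Set.range fun i => M i) with hV
  have hfr : finrank ℚ V = k := by
    simpa using finrank_span_eq_card h
  obtain ⟨s, hcard, hsupp, hzero⟩ := exists_coord_finset' V
  rw [hfr] at hcard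
  set c : Fin k → Fin n := fun t => (s.orderIsoOfFin hcard t : Fin n) with hc
  have hcinj : Function.Injective c := by
    intro a b hab
    exact (s.orderIsoOfFin hcard).injective (Subtype.ext hab)
  refine ⟨c, hcinj, ?_⟩
  intro hdet
  have hdetT : (M.submatrix id c)ᵀ.det = 0 := by rwa [Matrix.det_transpose]
  obtain ⟨x, hxne, hx0⟩ := (Matrix.exists_mulVec_eq_zero_iff).mpr hdetT
  have hvm : Matrix.vecMul x (M.submatrix id c) = 0 := by
    rw [← Matrix.mulVec_transpose]
    exact hx0
  set w := Matrix.vecMul x M with hw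
  have hwV : w ∈ V := by
    rw [hw, vecMul_eq_sum]
    exact Submodule.sum_mem _ fun i _ =>
      Submodule.smul_mem _ _ (Submodule.subset_span ⟨i, rfl⟩)
  have hwvan : ∀ j ∈ s, w j = 0 := by
    intro j hj
    obtain ⟨t, ht⟩ := (s.orderIsoOfFin hcard).surjective ⟨j, hj⟩
    have : c t = j := by rw [hc]; exact congrArg Subtype.val ht
    rw [← this]
    have := congrFun hvm t
    rw [vecMul_submatrix_apply] at this
    simpa [hw] using this
  have hw0 : w = 0 := hzero w hwV hwvan
  -- contradiction with linear independence
  have : ∑ i, x i • M i = 0 := by rw [← vecMul_eq_sum, ← hw, hw0]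
  have hx := Fintype.linearIndependent_iff.mp h x this
  exact hxne (funext hx)

/-- Cramer-style integral generating set of the null space of a matrix with
independent rows and subdeterminants bounded by `Δ`. -/
lemma cramer_basis {k n : ℕ} (Δ : ℚ) (hΔ : 1 ≤ Δ) (M : Matrix (Fin k) (Fin n) ℚ)
    (hint : ∀ i j, IsZ (M i j))
    (hdet : ∀ c : Fin k → Fin n, Function.Injective c → |(M.submatrix id c).det| ≤ Δ)
    (hrows : LinearIndependent ℚ (fun i => M i)) :
    ∃ u : Fin n → (Fin n → ℚ),
      (∀ j, M.mulVec (u j) = 0) ∧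
      (∀ j, IsZVec (u j)) ∧
      (∀ j i, |u j i| ≤ Δ) ∧
      (∀ y, M.mulVec y = 0 → ∃ coef : Fin n → ℚ, y = ∑ j, coef j • u j) ∧
      (∀ β : Fin n → ℚ, (∀ j, β ⬝ᵥ u j = 0) →
        β ∈ Submodule.span ℚ (Set.range (fun i => M i))) := by
  classical
  obtain ⟨c, hcinj, hD⟩ := exists_invertible_submatrix M hrows
  set N : Matrix (Fin k) (Fin k) ℚ := M.submatrix id c with hN
  set D : ℚ := N.det with hDdef
  set col : Fin n → (Fin k → ℚ) := fun j i => M i j with hcol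
  set cr : Fin n → (Fin k → ℚ) := fun j => N.cramer (col j) with hcr
  set sgl : Fin n → (Fin n → ℚ) := fun j => Pi.single j (1:ℚ) with hsgl
  set u : Fin n → (Fin n → ℚ) :=
    fun j => D • sgl j - ∑ t, (cr j t) • sgl (c t) with hu
  have hΔ0 : (0:ℚ) ≤ Δ := le_trans zero_le_one hΔ
  -- pointwise formula for u
  have hu_apply : ∀ j i, u j i =
      D * sgl j i - ∑ t, cr j t * sgl (c t) i := by
    intro j i
    simp [hu, Finset.sum_apply]
  -- N.mulVec (x) written through M columns
  have hNmul : ∀ (x : Fin k → ℚ) (i : Fin k),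
      N.mulVec x i = ∑ t, M i (c t) * x t := by
    intro x i
    simp [hN, Matrix.mulVec, dotProduct, Matrix.submatrix]
  -- (1) u j is in the null space of M
  have hnull : ∀ j, M.mulVec (u j) = 0 := by
    intro j
    have h1 : M.mulVec (u j)
        = D • M.mulVec (sgl j) - ∑ t, cr j t • M.mulVec (sgl (c t)) := by
      rw [hu]
      rw [Matrix.mulVec_sub, Matrix.mulVec_smul]
      congr 1
      rw [← Matrix.mulVecLin_apply, map_sum]
      simp [Matrix.mulVecLin_apply, Matrix.mulVec_smul]
    ext i
    rw [h1]
    simp only [hsgl, Matrix.mulVec_single, MulOpposite.op_one, one_smul, Matrix.col_apply, mul_one, Pi.sub_apply, Pi.smul_apply, smul_eq_mul,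
      Finset.sum_apply]
    have h2 : ∑ t, cr j t * M i (c t) = N.mulVec (cr j) i := by
      rw [hNmul]; exact Finset.sum_congr rfl fun t _ => mul_comm _ _
    have h3 : N.mulVec (cr j) = D • col j := by
      rw [hcr]; exact Matrix.mulVec_cramer N (col j)
    rw [h2, h3]
    simp [hcol, mul_comm]
  -- u vanishes for j in the range of c
  have hurange : ∀ t₀ : Fin k, u (c t₀) = 0 := by
    intro t₀
    have hcrj : cr (c t₀) = D • (Pi.single t₀ (1:ℚ) : Fin k → ℚ) := by
      ext t
      simp only [hcr, Matrix.cramer_apply]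
      by_cases ht : t = t₀
      · subst ht
        have : N.updateCol t (col (c t)) = N := by
          have : col (c t) = fun i => N i t := by
            ext i; simp [hcol, hN, Matrix.submatrix]
          rw [this, Matrix.updateCol_eq_self]
        rw [this]
        simp [hDdef, Pi.single_apply]
      · have : (N.updateCol t (col (c t₀))).det = 0 := by
          apply Matrix.det_zero_of_column_eq ht
          intro i
          simp [Matrix.updateCol_apply, hcol, hN, Matrix.submatrix, ht]
        rw [this]
        simp [Pi.single_apply, ht]
    ext i
    rw [hu_apply, hcrj]
    rw [Finset.sum_eq_single t₀ (by
        intro t _ ht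
        simp [Pi.single_apply, ht]) (by simp)]
    simp [hsgl, Pi.single_apply]
  -- integrality of entries of N and cramer vectors
  have hNint : IsZ D := by
    apply isZ_det
    intro i j; exact hint i (c j)
  have hcrint : ∀ j t, IsZ (cr j t) := by
    intro j t
    simp only [hcr, Matrix.cramer_apply]
    apply isZ_det
    intro i s
    rw [Matrix.updateCol_apply]
    by_cases h : s = t <;> simp [h, hint i (c s), hint i j, hcol, hN, Matrix.submatrix]
  -- (2) integrality of u
  have hZ : ∀ j, IsZVec (u j) := by
    intro j i
    rw [hu_apply]
    apply IsZ.sub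
    · apply IsZ.mul hNint
      by_cases h : i = j <;> simp [hsgl, Pi.single_apply, h, IsZ.one, IsZ.zero]
    · apply IsZ.sum
      intro t _
      apply IsZ.mul (hcrint j t)
      by_cases h : i = c t <;> simp [hsgl, Pi.single_apply, h, IsZ.one, IsZ.zero]
  -- the update-column determinant is a Δ-bounded subdeterminant
  have hcrbound : ∀ j t, j ∉ Set.range c → |cr j t| ≤ Δ := by
    intro j t hj
    simp only [hcr, Matrix.cramer_apply]
    have hupd : N.updateCol t (col j) = M.submatrix id (Function.update c t j) := by
      ext i s
      rw [Matrix.updateCol_apply]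
      by_cases h : s = t
      · subst h; simp [hcol, Matrix.submatrix, Function.update_self]
      · rw [if_neg h]
        simp [hN, Matrix.submatrix, Function.update_of_ne h]
    rw [hupd]
    apply hdet
    intro a b hab
    by_cases ha : a = t <;> by_cases hb : b = t
    · exact ha.trans hb.symm
    · exfalso
      subst ha
      rw [Function.update_self, Function.update_of_ne hb] at hab
      exact hj ⟨b, hab.symm⟩
    · exfalso
      subst hb
      rw [Function.update_of_ne ha, Function.update_self] at hab
      exact hj ⟨a, hab⟩
    · exact hcinj (by rwa [Function.update_of_ne ha, Function.update_of_ne hb] at hab)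
  -- (3) entry bound
  have hDb : |D| ≤ Δ := hdet c hcinj
  have hsgl_range : ∀ (j : Fin n), j ∉ Set.range c → ∀ t, sgl (c t) j = 0 := by
    intro j hj t
    simp only [hsgl]
    rw [Pi.single_apply]
    rw [if_neg]
    intro h; exact hj ⟨t, h.symm⟩
  have hbound : ∀ j i, |u j i| ≤ Δ := by
    intro j i
    by_cases hj : j ∈ Set.range c
    · obtain ⟨t₀, rfl⟩ := hj
      rw [hurange t₀]
      simpa using hΔ0
    · rw [hu_apply]
      by_cases hij : i = j
      · subst hij
        have h1 : sgl i i = 1 := by simp [hsgl]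
        have h2 : ∀ t, sgl (c t) i = 0 := hsgl_range i hj
        simp only [h1, h2, mul_one, mul_zero, Finset.sum_const_zero, sub_zero]
        exact hDb
      · by_cases hir : ∃ t, c t = i
        · obtain ⟨t', rfl⟩ := hir
          have h1 : sgl j (c t') = 0 := by
            simp only [hsgl]; rw [Pi.single_apply, if_neg]
            intro h; exact hj ⟨t', h⟩
          have h2 : ∑ t, cr j t * sgl (c t) (c t') = cr j t' := by
            rw [Finset.sum_eq_single t']
            · simp [hsgl]
            · intro t _ ht
              have : sgl (c t) (c t') = 0 := by
                simp only [hsgl]; rw [Pi.single_apply, if_neg]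
                intro h; exact ht (hcinj h.symm)
              rw [this, mul_zero]
            · simp
          rw [h1, h2, mul_zero, zero_sub, abs_neg]
          exact hcrbound j t' hj
        · have h1 : sgl j i = 0 := by
            simp only [hsgl]; rw [Pi.single_apply, if_neg hij]
          have h2 : ∀ t, sgl (c t) i = 0 := by
            intro t
            simp only [hsgl]; rw [Pi.single_apply, if_neg]
            intro h; exact hir ⟨t, h.symm⟩
          simp only [h1, h2, mul_zero, Finset.sum_const_zero, sub_zero, abs_zero]
          exact hΔ0
  -- the coordinate formula for u j i when j is not in the range of c
  have hu_free : ∀ (j j' : Fin n), j ∉ Set.range c → u j' j = if j = j' then D else 0 := by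
    intro j j' hj
    rw [hu_apply]
    have h3 : ∑ t, cr j' t * sgl (c t) j = 0 :=
      Finset.sum_eq_zero fun t _ => by rw [hsgl_range j hj t, mul_zero]
    rw [h3, sub_zero]
    simp only [hsgl]; rw [Pi.single_apply]
    by_cases h : j = j' <;> simp [h]
  -- (4) representation of null vectors
  have hrep : ∀ y, M.mulVec y = 0 → ∃ coef : Fin n → ℚ, y = ∑ j, coef j • u j := by
    intro y hy
    set y' : Fin n → ℚ := D • y - ∑ j, y j • u j with hy'
    have hfree : ∀ j, j ∉ Set.range c → y' j = 0 := by
      intro j hj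
      have h1 : (∑ j' : Fin n, y j' • u j') j = ∑ j' : Fin n, y j' * u j' j := by
        simp [Finset.sum_apply]
      have h2 : ∑ j' : Fin n, y j' * u j' j = y j * D := by
        rw [Finset.sum_eq_single j]
        · rw [hu_free j j hj, if_pos rfl]
        · intro j' _ hj'
          rw [hu_free j j' hj, if_neg (Ne.symm hj'), mul_zero]
        · simp
      rw [hy']
      simp only [Pi.sub_apply, Pi.smul_apply, smul_eq_mul, h1, h2]
      ring
    have hy'null : M.mulVec y' = 0 := by
      rw [hy', Matrix.mulVec_sub, Matrix.mulVec_smul, hy]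
      have : M.mulVec (∑ j, y j • u j) = ∑ j, y j • M.mulVec (u j) := by
        rw [← Matrix.mulVecLin_apply, map_sum]
        simp [Matrix.mulVecLin_apply, Matrix.mulVec_smul]
      rw [this]
      simp [hnull]
    have hximg : ∀ i : Fin k, ∑ t, M i (c t) * y' (c t) = 0 := by
      intro i
      have hsplit := Finset.sum_add_sum_compl (Finset.univ.image c) (fun j => M i j * y' j)
      have hcompl : ∑ j ∈ (Finset.univ.image c)ᶜ, M i j * y' j = 0 := by
        apply Finset.sum_eq_zero
        intro j hjc
        have hj : j ∉ Set.range c := by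
          intro ⟨t, ht⟩
          exact (Finset.mem_compl.mp hjc) (Finset.mem_image.mpr ⟨t, Finset.mem_univ t, ht⟩)
        rw [hfree j hj, mul_zero]
      have himg : ∑ j ∈ Finset.univ.image c, M i j * y' j = ∑ t, M i (c t) * y' (c t) := by
        rw [Finset.sum_image]
        intro a _ b _ h
        exact hcinj h
      have htot : ∑ j, M i j * y' j = 0 := by
        have := congrFun hy'null i
        simpa [Matrix.mulVec, dotProduct] using this
      rw [← himg]
      have := hsplit.trans htot
      rw [hcompl, add_zero] at this
      exact this
    have hrng : ∀ t, y' (c t) = 0 := by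
      by_contra hcon
      push_neg at hcon
      obtain ⟨t₀, ht₀⟩ := hcon
      have hxne : (fun t => y' (c t)) ≠ 0 := by
        intro h; exact ht₀ (congrFun h t₀)
      have : N.det = 0 := by
        rw [← Matrix.exists_mulVec_eq_zero_iff]
        refine ⟨fun t => y' (c t), hxne, ?_⟩
        ext i
        rw [hNmul]
        simpa using hximg i
      exact hD this
    have hy'0 : y' = 0 := by
      funext j
      by_cases hj : j ∈ Set.range c
      · obtain ⟨t, rfl⟩ := hj; exact hrng t
      · exact hfree j hj
    have hmain : D • y = ∑ j, y j • u j := by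
      have h : D • y - ∑ j, y j • u j = 0 := by rw [← hy']; exact hy'0
      exact sub_eq_zero.mp h
    refine ⟨fun j => y j / D, ?_⟩
    have hcalc : ∑ j, (y j / D) • u j = y := by
      calc ∑ j, (y j / D) • u j = D⁻¹ • ∑ j, y j • u j := by
            rw [Finset.smul_sum]
            exact Finset.sum_congr rfl fun j _ => by
              rw [smul_smul]
              congr 1
              exact div_eq_inv_mul (y j) D
        _ = D⁻¹ • (D • y) := by rw [← hmain]
        _ = y := by rw [smul_smul, inv_mul_cancel₀ hD, one_smul]
    exact hcalc.symm
  -- (5) duality: a vector orthogonal to all u j is in the row span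
  have hdual : ∀ β : Fin n → ℚ, (∀ j, β ⬝ᵥ u j = 0) →
      β ∈ Submodule.span ℚ (Set.range (fun i => M i)) := by
    intro β hβ
    set a : Fin k → ℚ := Matrix.vecMul (β ∘ c) N⁻¹ with ha
    set β' : Fin n → ℚ := β - Matrix.vecMul a M with hβ'
    have hNinv : Matrix.vecMul a N = β ∘ c := by
      rw [ha, Matrix.vecMul_vecMul, Matrix.nonsing_inv_mul N (isUnit_iff_ne_zero.mpr hD),
        Matrix.vecMul_one]
    have hrange0 : ∀ t, β' (c t) = 0 := by
      intro t
      rw [hβ']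
      simp only [Pi.sub_apply]
      rw [← vecMul_submatrix_apply a M c t, ← hN, hNinv]
      simp
    have hβ'u : ∀ j, β' ⬝ᵥ u j = 0 := by
      intro j
      rw [hβ', sub_dotProduct]
      rw [← dotProduct_mulVec a M (u j), hnull j, dotProduct_zero]
      rw [hβ j, sub_zero]
    have hfree0 : ∀ j, j ∉ Set.range c → β' j = 0 := by
      intro j hj
      have h0 := hβ'u j
      have h1 : ∀ i, β' i * u j i = if i = j then β' j * D else 0 := by
        intro i
        by_cases hi : i ∈ Set.range c
        · obtain ⟨t, rfl⟩ := hi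
          rw [hrange0 t, zero_mul, if_neg]
          rintro rfl
          exact hj ⟨t, rfl⟩
        · rw [hu_free i j hi]
          by_cases h : i = j
          · subst h; simp
          · simp [h]
      have h2 : β' ⬝ᵥ u j = β' j * D :=
        calc β' ⬝ᵥ u j = ∑ i, β' i * u j i := rfl
        _ = ∑ i, if i = j then β' j * D else 0 := Finset.sum_congr rfl (fun i _ => h1 i)
        _ = β' j * D := by simp
      rw [h2] at h0
      exact (mul_eq_zero.mp h0).resolve_right hD
    have hβ'0 : β' = 0 := by
      funext j
      by_cases hj : j ∈ Set.range c
      · obtain ⟨t, rfl⟩ := hj; exact hrange0 t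
      · exact hfree0 j hj
    have hβeq : β = Matrix.vecMul a M := by
      have := sub_eq_zero.mp (by rw [← hβ']; exact hβ'0)
      exact this
    rw [hβeq, vecMul_eq_sum]
    exact Submodule.sum_mem _ fun i _ =>
      Submodule.smul_mem _ _ (Submodule.subset_span ⟨i, rfl⟩)
  exact ⟨u, hnull, hZ, hbound, hrep, hdual⟩



/-- Conic Carathéodory: a conic combination can be rewritten using at most `n` vectors. -/
lemma caratheodory {n : ℕ} (P : (Fin n → ℚ) → Prop) :
    ∀ (m : ℕ) (lam : Fin m → ℚ) (g : Fin m → (Fin n → ℚ)),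
    (∀ t, 0 ≤ lam t) → (∀ t, P (g t)) →
    ∃ (m' : ℕ) (lam' : Fin m' → ℚ) (g' : Fin m' → (Fin n → ℚ)),
      m' ≤ n ∧ (∀ t, 0 ≤ lam' t) ∧ (∀ t, P (g' t)) ∧
      ∑ t, lam' t • g' t = ∑ t, lam t • g t := by
  intro m
  induction m with
  | zero =>
      intro lam g _ _
      exact ⟨0, Fin.elim0, Fin.elim0, Nat.zero_le n, fun t => t.elim0, fun t => t.elim0, rfl⟩
  | succ k ih =>
      intro lam g hlam hP
      by_cases hmn : k + 1 ≤ n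
      · exact ⟨k + 1, lam, g, hmn, hlam, hP, rfl⟩
      · -- the family is linearly dependent
        have hdep : ¬ LinearIndependent ℚ g := by
          intro h
          have := LinearIndependent.fintype_card_le_finrank h
          simp only [Fintype.card_fin, Module.finrank_fin_fun] at this
          omega
        obtain ⟨c0, hc0, i0, hi0⟩ := Fintype.not_linearIndependent_iff.mp hdep
        -- normalize so that some coefficient is positive
        obtain ⟨c, hcsum, i₀, hi₀⟩ :
            ∃ c : Fin (k+1) → ℚ, ∑ t, c t • g t = 0 ∧ ∃ i, 0 < c i := by
          by_cases hpos : ∃ i, 0 < c0 i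
          · exact ⟨c0, hc0, hpos⟩
          · push_neg at hpos
            refine ⟨-c0, ?_, i0, ?_⟩
            · simp only [Pi.neg_apply, neg_smul, Finset.sum_neg_distrib, hc0, neg_zero]
            · have := lt_of_le_of_ne (hpos i0) hi0
              simpa using this
        set S : Finset (Fin (k+1)) := Finset.univ.filter (fun t => 0 < c t) with hS
        have hSne : S.Nonempty := ⟨i₀, by simp [hS, hi₀]⟩
        obtain ⟨t₀, ht₀S, ht₀min⟩ := Finset.exists_min_image S (fun t => lam t / c t) hSne
        have hct₀ : 0 < c t₀ := by
          have := Finset.mem_filter.mp ht₀S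
          exact this.2
        set θ : ℚ := lam t₀ / c t₀ with hθ
        have hθ0 : 0 ≤ θ := div_nonneg (hlam t₀) hct₀.le
        set lam'' : Fin (k+1) → ℚ := fun t => lam t - θ * c t with hlam''
        have hlam''nn : ∀ t, 0 ≤ lam'' t := by
          intro t
          show 0 ≤ lam t - θ * c t
          by_cases hct : 0 < c t
          · have hmin : θ ≤ lam t / c t := ht₀min t (by simp [hS, hct])
            have : θ * c t ≤ (lam t / c t) * c t :=
              mul_le_mul_of_nonneg_right hmin hct.le
            rw [div_mul_cancel₀ _ (ne_of_gt hct)] at this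
            simp only [sub_nonneg]
            exact this
          · push_neg at hct
            have h1 : θ * c t ≤ 0 := mul_nonpos_of_nonneg_of_nonpos hθ0 hct
            have := hlam t
            simp only [sub_nonneg]
            linarith
        have hlam''t₀ : lam'' t₀ = 0 := by
          show lam t₀ - θ * c t₀ = 0
          rw [hθ, div_mul_cancel₀ _ (ne_of_gt hct₀), sub_self]
        have hsum'' : ∑ t, lam'' t • g t = ∑ t, lam t • g t := by
          show ∑ t, (lam t - θ * c t) • g t = _
          simp only [sub_smul, Finset.sum_sub_distrib]
          have : ∑ t, (θ * c t) • g t = θ • ∑ t, c t • g t := by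
            rw [Finset.smul_sum]
            exact Finset.sum_congr rfl fun t _ => by rw [smul_smul]
          rw [this, hcsum, smul_zero, sub_zero]
        -- drop index t₀
        have hdrop : ∑ t : Fin k, lam'' (t₀.succAbove t) • g (t₀.succAbove t)
            = ∑ t, lam t • g t := by
          have := Fin.sum_univ_succAbove (fun t => lam'' t • g t) t₀
          rw [hlam''t₀, zero_smul, zero_add] at this
          rw [← this, hsum'']
        obtain ⟨m', lam', g', hm', hlam', hP', hsum'⟩ :=
          ih (fun t => lam'' (t₀.succAbove t)) (fun t => g (t₀.succAbove t))
            (fun t => hlam''nn _) (fun t => hP _)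
        exact ⟨m', lam', g', hm', hlam', hP', by rw [hsum', hdrop]⟩



/-- Move from `y` towards `-v` until a new constraint becomes tight. -/
lemma split_step {ℓ n : ℕ} (B : Matrix (Fin ℓ) (Fin n) ℚ) (y v : Fin n → ℚ)
    (hy : ∀ i, 0 ≤ B i ⬝ᵥ y)
    (hvT : ∀ i, B i ⬝ᵥ y = 0 → B i ⬝ᵥ v = 0)
    (i₁' : Fin ℓ) (hi₁' : 0 < B i₁' ⬝ᵥ v) :
    ∃ (τ : ℚ) (i₁ : Fin ℓ), 0 < τ ∧ 0 < B i₁ ⬝ᵥ v ∧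
      (∀ i, 0 ≤ B i ⬝ᵥ (y - τ • v)) ∧
      (∀ i, B i ⬝ᵥ y = 0 → B i ⬝ᵥ (y - τ • v) = 0) ∧
      B i₁ ⬝ᵥ (y - τ • v) = 0 := by
  classical
  set S : Finset (Fin ℓ) := Finset.univ.filter (fun i => 0 < B i ⬝ᵥ v) with hS
  have hSne : S.Nonempty := ⟨i₁', by simp [hS, hi₁']⟩
  obtain ⟨i₁, hi₁S, hmin⟩ :=
    Finset.exists_min_image S (fun i => (B i ⬝ᵥ y) / (B i ⬝ᵥ v)) hSne
  have hi₁v : 0 < B i₁ ⬝ᵥ v := (Finset.mem_filter.mp hi₁S).2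
  have hi₁y : 0 < B i₁ ⬝ᵥ y := by
    rcases lt_or_eq_of_le (hy i₁) with h | h
    · exact h
    · exact absurd (hvT i₁ h.symm) (ne_of_gt hi₁v)
  set τ : ℚ := (B i₁ ⬝ᵥ y) / (B i₁ ⬝ᵥ v) with hτ
  have hτpos : 0 < τ := div_pos hi₁y hi₁v
  have hdot : ∀ i, B i ⬝ᵥ (y - τ • v) = B i ⬝ᵥ y - τ * (B i ⬝ᵥ v) := by
    intro i
    rw [dotProduct_sub, dotProduct_smul]
    rfl
  refine ⟨τ, i₁, hτpos, hi₁v, ?_, ?_, ?_⟩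
  · intro i
    rw [hdot]
    by_cases hiv : 0 < B i ⬝ᵥ v
    · have hmem : i ∈ S := by simp [hS, hiv]
      have h1 : τ ≤ (B i ⬝ᵥ y) / (B i ⬝ᵥ v) := hmin i hmem
      have h2 : τ * (B i ⬝ᵥ v) ≤ ((B i ⬝ᵥ y) / (B i ⬝ᵥ v)) * (B i ⬝ᵥ v) :=
        mul_le_mul_of_nonneg_right h1 hiv.le
      rw [div_mul_cancel₀ _ (ne_of_gt hiv)] at h2
      linarith
    · push_neg at hiv
      have h1 : τ * (B i ⬝ᵥ v) ≤ 0 := mul_nonpos_of_nonneg_of_nonpos hτpos.le hiv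
      have := hy i
      linarith
  · intro i hi
    rw [hdot, hi, hvT i hi, mul_zero, sub_zero]
  · rw [hdot, hτ, div_mul_cancel₀ _ (ne_of_gt hi₁v), sub_self]

/-- Select an injective family of rows of `B` indexed by `T` which is linearly
independent and spans the same subspace as the rows in `T`. -/
lemma row_select {ℓ n : ℕ} (B : Matrix (Fin ℓ) (Fin n) ℚ) (T : Set (Fin ℓ)) :
    ∃ (k : ℕ) (f : Fin k → Fin ℓ), Function.Injective f ∧ (∀ t, f t ∈ T) ∧
      LinearIndependent ℚ (fun t => B (f t)) ∧
      Submodule.span ℚ (Set.range fun t => B (f t))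
        = Submodule.span ℚ ((fun i => B i) '' T) := by
  classical
  set S : Set (Fin n → ℚ) := (fun i => B i) '' T with hSdef
  obtain ⟨s, hsub, hspan, hli⟩ := exists_linearIndependent ℚ S
  have hSfin : S.Finite := Set.Finite.image _ (Set.toFinite T)
  have hsfin : s.Finite := hSfin.subset hsub
  haveI : Fintype ↥s := hsfin.fintype
  set k := Fintype.card ↥s with hk
  set e : Fin k ≃ ↥s := (Fintype.equivFin ↥s).symm with he
  have hchoice : ∀ t : Fin k, ∃ i, i ∈ T ∧ B i = (e t : Fin n → ℚ) := by
    intro t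
    have := hsub (e t).2
    obtain ⟨i, hiT, hieq⟩ := this
    exact ⟨i, hiT, hieq⟩
  choose f hfT hfB using hchoice
  have hinj : Function.Injective f := by
    intro a b hab
    have : (e a : Fin n → ℚ) = (e b : Fin n → ℚ) := by rw [← hfB, ← hfB, hab]
    exact e.injective (Subtype.ext this)
  have hBf : (fun t => B (f t)) = fun t => ((e t : Fin n → ℚ)) := funext fun t => hfB t
  refine ⟨k, f, hinj, hfT, ?_, ?_⟩
  · rw [hBf]
    exact hli.comp e e.injective
  · rw [hBf]
    have hrange : Set.range (fun t => ((e t : Fin n → ℚ))) = s := by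
      have : (fun t => ((e t : Fin n → ℚ))) = Subtype.val ∘ e := rfl
      rw [this, Set.range_comp]
      rw [Equiv.range_eq_univ]
      simp
    rw [hrange, hspan]

section Decomp

variable {ℓ n : ℕ} (B : Matrix (Fin ℓ) (Fin n) ℚ) (Δ : ℚ)

/-- Lineality-space case of the decomposition. -/
lemma decomp_lineal (hΔ : 1 ≤ Δ)
    (hint : ∀ i j, IsZ (B i j))
    (hsub : ∀ (k : ℕ) (f : Fin k → Fin ℓ) (c : Fin k → Fin n),
      Function.Injective f → Function.Injective c → |(B.submatrix f c).det| ≤ Δ)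
    (y : Fin n → ℚ) (hy0 : ∀ i, B i ⬝ᵥ y = 0) :
    ∃ (m : ℕ) (lam : Fin m → ℚ) (g : Fin m → (Fin n → ℚ)),
      (∀ t, 0 ≤ lam t) ∧ (∀ t, IsZVec (g t)) ∧ (∀ t i, |g t i| ≤ Δ) ∧
      (∀ t i, 0 ≤ B i ⬝ᵥ g t) ∧ y = ∑ t, lam t • g t := by
  classical
  obtain ⟨k, f, hfinj, hfT, hli, hspan⟩ := row_select B Set.univ
  set M : Matrix (Fin k) (Fin n) ℚ := B.submatrix f id with hM
  obtain ⟨u, hnull, hZ, hbound, hrep, hdual⟩ :=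
    cramer_basis Δ hΔ M (fun i j => hint (f i) j)
      (fun c hcinj => by
        rw [hM, Matrix.submatrix_submatrix]
        simpa using hsub k f c hfinj hcinj)
      hli
  have hynull : M.mulVec y = 0 := by
    ext t
    exact hy0 (f t)
  obtain ⟨coef, hcoef⟩ := hrep y hynull
  -- every row of B kills every u j
  have hkill : ∀ i j, B i ⬝ᵥ u j = 0 := by
    intro i j
    have hmem : B i ∈ Submodule.span ℚ (Set.range fun t => B (f t)) := by
      rw [hspan]
      exact Submodule.subset_span ⟨i, Set.mem_univ i, rfl⟩
    refine dot_eq_zero_of_mem_span _ _ ?_ hmem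
    rintro v ⟨t, rfl⟩
    exact congrFun (hnull j) t
  refine ⟨n, fun j => |coef j|, fun j => if 0 ≤ coef j then u j else -(u j),
    fun j => abs_nonneg _, ?_, ?_, ?_, ?_⟩
  · intro j i
    by_cases h : 0 ≤ coef j <;> simp only [h, if_true, if_false, Pi.neg_apply]
    · exact hZ j i
    · exact (hZ j i).neg
  · intro j i
    by_cases h : 0 ≤ coef j <;> simp only [h, if_true, if_false, Pi.neg_apply, abs_neg]
    · exact hbound j i
    · exact hbound j i
  · intro j i
    by_cases h : 0 ≤ coef j <;> simp only [h, if_true, if_false]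
    · rw [hkill i j]
    · rw [dotProduct_neg, hkill i j, neg_zero]
  · rw [hcoef]
    apply Finset.sum_congr rfl
    intro j _
    by_cases h : 0 ≤ coef j
    · simp only [h, if_true]
      rw [abs_of_nonneg h]
    · simp only [h, if_false]
      rw [abs_of_neg (lt_of_not_ge h), smul_neg, neg_smul, neg_neg]

/-- Main decomposition of an element of the cone `{x | Bx ≥ 0}` into a conic
combination of bounded integral elements of the cone. -/
lemma decomp (hΔ : 1 ≤ Δ)
    (hint : ∀ i j, IsZ (B i j))
    (hsub : ∀ (k : ℕ) (f : Fin k → Fin ℓ) (c : Fin k → Fin n),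
      Function.Injective f → Function.Injective c → |(B.submatrix f c).det| ≤ Δ) :
    ∀ (d : ℕ) (y : Fin n → ℚ), (∀ i, 0 ≤ B i ⬝ᵥ y) →
    n ≤ d + finrank ℚ (Submodule.span ℚ ((fun i => B i) '' {i | B i ⬝ᵥ y = 0})) →
    ∃ (m : ℕ) (lam : Fin m → ℚ) (g : Fin m → (Fin n → ℚ)),
      (∀ t, 0 ≤ lam t) ∧ (∀ t, IsZVec (g t)) ∧ (∀ t i, |g t i| ≤ Δ) ∧
      (∀ t i, 0 ≤ B i ⬝ᵥ g t) ∧ y = ∑ t, lam t • g t := by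
  classical
  intro d
  induction d with
  | zero =>
      intro y hy hrank
      -- the tight rows span everything, so B y = 0
      apply decomp_lineal B Δ hΔ hint hsub y
      intro i
      set T : Set (Fin ℓ) := {i | B i ⬝ᵥ y = 0} with hT
      have htop : Submodule.span ℚ ((fun i => B i) '' T) = ⊤ := by
        apply Submodule.eq_top_of_finrank_eq
        have h1 : finrank ℚ (Fin n → ℚ) = n := Module.finrank_fin_fun ℚ
        have h2 : finrank ℚ (Submodule.span ℚ ((fun i => B i) '' T)) ≤ n :=
          (Submodule.finrank_le _).trans_eq h1
        omega
      have hmem : B i ∈ Submodule.span ℚ ((fun i => B i) '' T) := by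
        rw [htop]; trivial
      refine dot_eq_zero_of_mem_span _ _ ?_ hmem
      rintro v ⟨i', hi', rfl⟩
      exact hi'
  | succ d ih =>
      intro y hy hrank
      by_cases hbase : ∀ i, B i ⬝ᵥ y = 0
      · exact decomp_lineal B Δ hΔ hint hsub y hbase
      -- non-trivial case
      set T : Set (Fin ℓ) := {i | B i ⬝ᵥ y = 0} with hT
      obtain ⟨k, f, hfinj, hfT, hli, hspan⟩ := row_select B T
      set M : Matrix (Fin k) (Fin n) ℚ := B.submatrix f id with hM
      obtain ⟨u, hnull, hZ, hbound, hrep, hdual⟩ :=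
        cramer_basis Δ hΔ M (fun i j => hint (f i) j)
          (fun c hcinj => by
            rw [hM, Matrix.submatrix_submatrix]
            simpa using hsub k f c hfinj hcinj)
          hli
      push_neg at hbase
      obtain ⟨iS, hiS⟩ := hbase
      have hiSpos : 0 < B iS ⬝ᵥ y := lt_of_le_of_ne (hy iS) (Ne.symm hiS)
      -- rows in the span of tight rows kill u j for every j
      have hspan_kill : ∀ x, x ∈ Submodule.span ℚ ((fun i => B i) '' T) →
          ∀ j, x ⬝ᵥ u j = 0 := by
        intro x hx j
        rw [← hspan] at hx
        refine dot_eq_zero_of_mem_span _ _ ?_ hx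
        rintro v ⟨t, rfl⟩
        exact congrFun (hnull j) t
      have hTmem : ∀ i, B i ⬝ᵥ y = 0 → B i ∈ Submodule.span ℚ ((fun i => B i) '' T) := by
        intro i hi
        exact Submodule.subset_span ⟨i, hi, rfl⟩
      -- B iS is not in the span of the tight rows
      have hiSnot : B iS ∉ Submodule.span ℚ ((fun i => B i) '' T) := by
        intro hmem
        have h := dot_eq_zero_of_mem_span ((fun i => B i) '' T) y ?_ hmem
        · exact hiS h
        · rintro v ⟨i', hi', rfl⟩
          exact hi'
      -- pick a generator of the null space not orthogonal to B iS
      have hj₀ : ∃ j, B iS ⬝ᵥ u j ≠ 0 := by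
        by_contra hcon
        push_neg at hcon
        have := hdual (B iS) hcon
        have hr : Set.range (fun i => M i) = Set.range (fun t => B (f t)) := rfl
        rw [hr, hspan] at this
        exact hiSnot this
      obtain ⟨j₀, hj₀ne⟩ := hj₀
      set u₀ : Fin n → ℚ := u j₀ with hu₀
      have hu₀T : ∀ i, B i ⬝ᵥ y = 0 → B i ⬝ᵥ u₀ = 0 := by
        intro i hi
        exact hspan_kill (B i) (hTmem i hi) j₀
      -- rank increase helper
      have hrank_step : ∀ (y' : Fin n → ℚ) (i₁ : Fin ℓ),
          (∀ i, 0 ≤ B i ⬝ᵥ y') →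
          (∀ i, B i ⬝ᵥ y = 0 → B i ⬝ᵥ y' = 0) →
          B i₁ ⬝ᵥ y' = 0 → B i₁ ⬝ᵥ u₀ ≠ 0 →
          n ≤ d + finrank ℚ (Submodule.span ℚ ((fun i => B i) '' {i | B i ⬝ᵥ y' = 0})) := by
        intro y' i₁ hy' htight h₁tight h₁ne
        set T' : Set (Fin ℓ) := {i | B i ⬝ᵥ y' = 0} with hT'
        have hTsub : Submodule.span ℚ ((fun i => B i) '' T)
            ≤ Submodule.span ℚ ((fun i => B i) '' T') := by
          apply Submodule.span_mono
          apply Set.image_mono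
          intro i hi
          exact htight i hi
        have hmem1 : B i₁ ∈ Submodule.span ℚ ((fun i => B i) '' T') :=
          Submodule.subset_span ⟨i₁, h₁tight, rfl⟩
        have hnot1 : B i₁ ∉ Submodule.span ℚ ((fun i => B i) '' T) := by
          intro hmem
          exact h₁ne (hspan_kill (B i₁) hmem j₀)
        have hlt : Submodule.span ℚ ((fun i => B i) '' T)
            < Submodule.span ℚ ((fun i => B i) '' T') :=
          lt_of_le_of_ne hTsub (fun h => hnot1 (h ▸ hmem1))
        have hfr := Submodule.finrank_lt_finrank_of_lt hlt
        omega
      -- case analysis on the signs of B i ⬝ᵥ u₀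
      by_cases hneg : ∃ i, B i ⬝ᵥ u₀ < 0
      · by_cases hpos : ∃ i, 0 < B i ⬝ᵥ u₀
        · -- two-sided case
          obtain ⟨ip, hip⟩ := hpos
          obtain ⟨im, him⟩ := hneg
          obtain ⟨τ₁, i₁, hτ₁, hi₁v, hfeas₁, htight₁, hnew₁⟩ :=
            split_step B y u₀ hy hu₀T ip hip
          have hmu : 0 < B im ⬝ᵥ (-u₀) := by
            rw [dotProduct_neg]; linarith
          obtain ⟨τ₂, i₂, hτ₂, hi₂v, hfeas₂, htight₂, hnew₂⟩ :=
            split_step B y (-u₀) hy (fun i hi => by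
              rw [dotProduct_neg, hu₀T i hi, neg_zero]) im hmu
          set y₁ : Fin n → ℚ := y - τ₁ • u₀ with hy₁
          set y₂ : Fin n → ℚ := y - τ₂ • (-u₀) with hy₂
          obtain ⟨m₁, lam₁, g₁, hl₁, hz₁, hb₁, hc₁, hs₁⟩ :=
            ih y₁ hfeas₁ (hrank_step y₁ i₁ hfeas₁ htight₁ hnew₁ (ne_of_gt hi₁v))
          obtain ⟨m₂, lam₂, g₂, hl₂, hz₂, hb₂, hc₂, hs₂⟩ :=
            ih y₂ hfeas₂ (hrank_step y₂ i₂ hfeas₂ htight₂ hnew₂ (by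
              rw [dotProduct_neg] at hi₂v; intro h; rw [h] at hi₂v; simp at hi₂v))
          set α : ℚ := τ₁ / (τ₁ + τ₂) with hα
          have hsumpos : 0 < τ₁ + τ₂ := by linarith
          have hα0 : 0 ≤ α := div_nonneg hτ₁.le hsumpos.le
          have hα1 : 0 ≤ 1 - α := by
            rw [hα]
            rw [sub_nonneg, div_le_one hsumpos]
            linarith
          have hconv : y = (1 - α) • y₁ + α • y₂ := by
            rw [hy₁, hy₂]
            have : (1 - α) • (y - τ₁ • u₀) + α • (y - τ₂ • (-u₀))
                = y + (α * τ₂ - (1 - α) * τ₁) • u₀ := by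
              module
            rw [this]
            have hz : α * τ₂ - (1 - α) * τ₁ = 0 := by
              rw [hα]
              field_simp
              ring
            rw [hz, zero_smul, add_zero]
          refine ⟨m₁ + m₂,
            Fin.addCases (fun t => (1 - α) * lam₁ t) (fun t => α * lam₂ t),
            Fin.addCases g₁ g₂, ?_, ?_, ?_, ?_, ?_⟩
          · intro t
            refine Fin.addCases ?_ ?_ t
            · intro t'; simp only [Fin.addCases_left]
              exact mul_nonneg hα1 (hl₁ t')
            · intro t'; simp only [Fin.addCases_right]
              exact mul_nonneg hα0 (hl₂ t')
          · intro t
            refine Fin.addCases ?_ ?_ t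
            · intro t'; simp only [Fin.addCases_left]; exact hz₁ t'
            · intro t'; simp only [Fin.addCases_right]; exact hz₂ t'
          · intro t
            refine Fin.addCases ?_ ?_ t
            · intro t'; simp only [Fin.addCases_left]; exact hb₁ t'
            · intro t'; simp only [Fin.addCases_right]; exact hb₂ t'
          · intro t
            refine Fin.addCases ?_ ?_ t
            · intro t'; simp only [Fin.addCases_left]; exact hc₁ t'
            · intro t'; simp only [Fin.addCases_right]; exact hc₂ t'
          · rw [Fin.sum_univ_add]
            simp only [Fin.addCases_left, Fin.addCases_right]
            have h1 : ∑ t, ((1 - α) * lam₁ t) • g₁ t = (1 - α) • ∑ t, lam₁ t • g₁ t := by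
              rw [Finset.smul_sum]
              exact Finset.sum_congr rfl fun t _ => by rw [smul_smul]
            have h2 : ∑ t, (α * lam₂ t) • g₂ t = α • ∑ t, lam₂ t • g₂ t := by
              rw [Finset.smul_sum]
              exact Finset.sum_congr rfl fun t _ => by rw [smul_smul]
            rw [h1, h2, ← hs₁, ← hs₂, ← hconv]
        · -- all directions ≤ 0 : use v = -u₀ which lies in the cone
          push_neg at hpos
          have hvc : ∀ i, 0 ≤ B i ⬝ᵥ (-u₀) := by
            intro i
            rw [dotProduct_neg]
            linarith [hpos i]
          obtain ⟨im, him⟩ := hneg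
          have hmu : 0 < B im ⬝ᵥ (-u₀) := by
            rw [dotProduct_neg]; linarith
          obtain ⟨τ, i₁, hτ, hi₁v, hfeas, htight, hnew⟩ :=
            split_step B y (-u₀) hy (fun i hi => by
              rw [dotProduct_neg, hu₀T i hi, neg_zero]) im hmu
          set y₁ : Fin n → ℚ := y - τ • (-u₀) with hy₁
          obtain ⟨m₁, lam₁, g₁, hl₁, hz₁, hb₁, hc₁, hs₁⟩ :=
            ih y₁ hfeas (hrank_step y₁ i₁ hfeas htight hnew (by
              rw [dotProduct_neg] at hi₁v; intro h; rw [h] at hi₁v; simp at hi₁v))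
          refine ⟨m₁ + 1, Fin.snoc lam₁ τ, Fin.snoc g₁ (-u₀), ?_, ?_, ?_, ?_, ?_⟩
          · intro t
            refine Fin.lastCases ?_ ?_ t
            · simp only [Fin.snoc_last]; exact hτ.le
            · intro t'; simp only [Fin.snoc_castSucc]; exact hl₁ t'
          · intro t
            refine Fin.lastCases ?_ ?_ t
            · simp only [Fin.snoc_last]
              intro i; exact ((hZ j₀) i).neg
            · intro t'; simp only [Fin.snoc_castSucc]; exact hz₁ t'
          · intro t
            refine Fin.lastCases ?_ ?_ t
            · simp only [Fin.snoc_last]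
              intro i
              rw [Pi.neg_apply, abs_neg]
              exact hbound j₀ i
            · intro t'; simp only [Fin.snoc_castSucc]; exact hb₁ t'
          · intro t
            refine Fin.lastCases ?_ ?_ t
            · simp only [Fin.snoc_last]; intro i; exact hvc i
            · intro t'; simp only [Fin.snoc_castSucc]; exact hc₁ t'
          · rw [Fin.sum_univ_castSucc]
            simp only [Fin.snoc_castSucc, Fin.snoc_last]
            rw [← hs₁, hy₁]
            module
      · -- all directions ≥ 0 : use v = u₀
        push_neg at hneg
        have hvc : ∀ i, 0 ≤ B i ⬝ᵥ u₀ := hneg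
        have hposS : 0 < B iS ⬝ᵥ u₀ := lt_of_le_of_ne (hvc iS) (Ne.symm hj₀ne)
        obtain ⟨τ, i₁, hτ, hi₁v, hfeas, htight, hnew⟩ :=
          split_step B y u₀ hy hu₀T iS hposS
        set y₁ : Fin n → ℚ := y - τ • u₀ with hy₁
        obtain ⟨m₁, lam₁, g₁, hl₁, hz₁, hb₁, hc₁, hs₁⟩ :=
          ih y₁ hfeas (hrank_step y₁ i₁ hfeas htight hnew (ne_of_gt hi₁v))
        refine ⟨m₁ + 1, Fin.snoc lam₁ τ, Fin.snoc g₁ u₀, ?_, ?_, ?_, ?_, ?_⟩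
        · intro t
          refine Fin.lastCases ?_ ?_ t
          · simp only [Fin.snoc_last]; exact hτ.le
          · intro t'; simp only [Fin.snoc_castSucc]; exact hl₁ t'
        · intro t
          refine Fin.lastCases ?_ ?_ t
          · simp only [Fin.snoc_last]; exact hZ j₀
          · intro t'; simp only [Fin.snoc_castSucc]; exact hz₁ t'
        · intro t
          refine Fin.lastCases ?_ ?_ t
          · simp only [Fin.snoc_last]; exact hbound j₀
          · intro t'; simp only [Fin.snoc_castSucc]; exact hb₁ t'
        · intro t
          refine Fin.lastCases ?_ ?_ t
          · simp only [Fin.snoc_last]; intro i; exact hvc i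
          · intro t'; simp only [Fin.snoc_castSucc]; exact hc₁ t'
        · rw [Fin.sum_univ_castSucc]
          simp only [Fin.snoc_castSucc, Fin.snoc_last]
          rw [← hs₁, hy₁]
          module

end Decomp

end CGST

/-- All absolute values of subdeterminants of `A` are bounded by `Δ`. -/
def SubdetBound {ℓ n : ℕ} (A : Matrix (Fin ℓ) (Fin n) ℤ) (Δ : ℤ) : Prop :=
  ∀ (k : ℕ) (f : Fin k → Fin ℓ) (g : Fin k → Fin n),
    Function.Injective f → Function.Injective g →
      |(A.submatrix f g).det| ≤ Δ

theorem solution_integral_close {ℓ n : ℕ}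
    (A : Matrix (Fin ℓ) (Fin n) ℤ) (b : Fin ℓ → ℤ) (Δ : ℤ)
    (hΔ : 1 ≤ Δ) (hsub : SubdetBound A Δ)
    (z : Fin n → ℤ) (hz : A.mulVec z ≤ b)
    (r : Fin n → ℚ)
    (hr : (A.map (fun a => (a : ℚ))).mulVec r ≤ fun j => (b j : ℚ)) :
    ∃ zstar : Fin n → ℤ,
      A.mulVec zstar ≤ b ∧
      ∀ i, |(zstar i : ℚ) - r i| ≤ (n : ℚ) * (Δ : ℚ) := by
  classical
  open CGST in
  set Aq : Matrix (Fin ℓ) (Fin n) ℚ := A.map (fun a => (a : ℚ)) with hAq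
  set zq : Fin n → ℚ := fun j => (z j : ℚ) with hzq
  set y : Fin n → ℚ := fun j => (z j : ℚ) - r j with hy
  have hΔq : (1:ℚ) ≤ (Δ:ℚ) := by exact_mod_cast hΔ
  have hΔq0 : (0:ℚ) ≤ (Δ:ℚ) := le_trans zero_le_one hΔq
  set ε : Fin ℓ → ℚ := fun i => if 0 ≤ Aq i ⬝ᵥ y then 1 else -1 with hε
  set B : Matrix (Fin ℓ) (Fin n) ℚ := Matrix.of (fun i j => ε i * Aq i j) with hB
  have hεabs : ∀ i, |ε i| = 1 := by
    intro i
    rw [hε]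
    by_cases h : 0 ≤ Aq i ⬝ᵥ y <;> simp [h]
  have hBdot : ∀ i (x : Fin n → ℚ), B i ⬝ᵥ x = ε i * (Aq i ⬝ᵥ x) := by
    intro i x
    simp [hB, dotProduct, Finset.mul_sum, mul_assoc]
  -- the `z`-cast dot products are the integral ones
  have hAzi : ∀ i, Aq i ⬝ᵥ zq = ((A.mulVec z i : ℤ) : ℚ) := by
    intro i
    simp [hAq, hzq, Matrix.mulVec, dotProduct]
  have hy0 : ∀ i, 0 ≤ B i ⬝ᵥ y := by
    intro i
    rw [hBdot, hε]
    by_cases h : 0 ≤ Aq i ⬝ᵥ y <;> simp [h]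
    · linarith
  have hint : ∀ i j, CGST.IsZ (B i j) := by
    intro i j
    have : B i j = ε i * ((A i j : ℤ) : ℚ) := by simp [hB, hAq]
    rw [this, hε]
    by_cases h : 0 ≤ Aq i ⬝ᵥ y <;> simp only [h, if_true, if_false]
    · rw [one_mul]; exact IsZ.intCast _
    · exact ⟨-(A i j), by push_cast; ring⟩
  have hsubB : ∀ (k : ℕ) (f : Fin k → Fin ℓ) (c : Fin k → Fin n),
      Function.Injective f → Function.Injective c → |(B.submatrix f c).det| ≤ (Δ:ℚ) := by
    intro k f c hf hc
    have h1 : B.submatrix f c = Matrix.of (fun a b => ε (f a) * (Aq.submatrix f c) a b) := by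
      ext a b; simp [hB, Matrix.submatrix]
    have h2 : (B.submatrix f c).det = (∏ a, ε (f a)) * (Aq.submatrix f c).det := by
      rw [h1, Matrix.det_mul_column]
    have h3 : Aq.submatrix f c = (Int.castRingHom ℚ).mapMatrix (A.submatrix f c) := by
      ext a b; simp [hAq, Matrix.submatrix]
    have h4 : (Aq.submatrix f c).det = ((A.submatrix f c).det : ℚ) := by
      rw [h3, ← RingHom.map_det]; rfl
    rw [h2, abs_mul, h4]
    have h5 : |∏ a, ε (f a)| = 1 := by
      rw [Finset.abs_prod]
      simp [hεabs]
    rw [h5, one_mul, ← Int.cast_abs]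
    exact_mod_cast hsub k f c hf hc
  -- decompose y
  obtain ⟨m₀, lam₀, g₀, hl₀, hz₀, hb₀, hc₀, hs₀⟩ :=
    CGST.decomp B (Δ:ℚ) hΔq hint hsubB n y hy0 (by omega)
  -- reduce the number of terms to at most n
  obtain ⟨m, lam, g, hmn, hl, hP, hsum⟩ :=
    CGST.caratheodory
      (fun v => CGST.IsZVec v ∧ (∀ i, |v i| ≤ (Δ:ℚ)) ∧ (∀ i, 0 ≤ B i ⬝ᵥ v))
      m₀ lam₀ g₀ hl₀ (fun t => ⟨hz₀ t, hb₀ t, hc₀ t⟩)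
  have hyrep : y = ∑ t, lam t • g t := by rw [hsum, ← hs₀]
  have hgZ : ∀ t, CGST.IsZVec (g t) := fun t => (hP t).1
  have hgb : ∀ t i, |g t i| ≤ (Δ:ℚ) := fun t => (hP t).2.1
  have hgc : ∀ t i, 0 ≤ B i ⬝ᵥ g t := fun t => (hP t).2.2
  -- rounded coefficients
  set F : Fin m → ℚ := fun t => ((⌊lam t⌋ : ℤ) : ℚ) with hF
  set fr : Fin m → ℚ := fun t => lam t - F t with hfr
  have hF0 : ∀ t, 0 ≤ F t := by
    intro t
    show (0:ℚ) ≤ ((⌊lam t⌋ : ℤ) : ℚ)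
    exact_mod_cast Int.floor_nonneg.mpr (hl t)
  have hfr0 : ∀ t, 0 ≤ fr t := by
    intro t
    rw [hfr, hF, sub_nonneg]
    exact Int.floor_le (lam t)
  have hfr1 : ∀ t, fr t ≤ 1 := by
    intro t
    show lam t - ((⌊lam t⌋ : ℤ) : ℚ) ≤ 1
    have := Int.lt_floor_add_one (lam t)
    linarith
  set w : Fin n → ℚ := fun j => ∑ t, F t * g t j with hw
  set x : Fin n → ℚ := fun j => (z j : ℚ) - w j with hx
  have hxZ : CGST.IsZVec x := by
    intro j
    rw [hx]
    refine IsZ.sub (IsZ.intCast (z j)) ?_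
    refine IsZ.sum _ _ fun t _ => IsZ.mul (IsZ.intCast ⌊lam t⌋) (hgZ t j)
  choose zstar hzstar using hxZ
  have hxz : ∀ j, x j = ((zstar j : ℤ) : ℚ) := hzstar
  -- the fractional remainder
  have hywfr : ∀ j, y j - w j = ∑ t, fr t * g t j := by
    intro j
    have h1 : y j = ∑ t, lam t * g t j := by
      have := congrFun hyrep j
      simpa [Finset.sum_apply] using this
    rw [h1, hw, hfr]
    rw [← Finset.sum_sub_distrib]
    exact Finset.sum_congr rfl fun t _ => by ring
  -- dot products with Aq rows
  have hAqw : ∀ i, Aq i ⬝ᵥ w = ∑ t, F t * (Aq i ⬝ᵥ g t) := by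
    intro i
    rw [hw]
    simp only [dotProduct, Finset.mul_sum]
    rw [Finset.sum_comm]
    exact Finset.sum_congr rfl fun t _ => Finset.sum_congr rfl fun j _ => by ring
  have hAqyw : ∀ i, Aq i ⬝ᵥ (fun j => y j - w j) = ∑ t, fr t * (Aq i ⬝ᵥ g t) := by
    intro i
    have h1 : (fun j => y j - w j) = fun j => ∑ t, fr t * g t j := funext hywfr
    rw [h1]
    simp only [dotProduct, Finset.mul_sum]
    rw [Finset.sum_comm]
    exact Finset.sum_congr rfl fun t _ => Finset.sum_congr rfl fun j _ => by ring
  -- feasibility over ℚ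
  have hfeasq : ∀ i, Aq i ⬝ᵥ x ≤ (b i : ℚ) := by
    intro i
    by_cases hεi : 0 ≤ Aq i ⬝ᵥ y
    · -- ε i = 1 : B i = Aq i
      have hBi : ∀ v, B i ⬝ᵥ v = Aq i ⬝ᵥ v := by
        intro v
        rw [hBdot, hε]
        simp [hεi]
      have hwpos : 0 ≤ Aq i ⬝ᵥ w := by
        rw [hAqw]
        apply Finset.sum_nonneg
        intro t _
        exact mul_nonneg (hF0 t) (by rw [← hBi]; exact hgc t i)
      have hxsplit : Aq i ⬝ᵥ x = Aq i ⬝ᵥ zq - Aq i ⬝ᵥ w := by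
        rw [hx, hzq, ← dotProduct_sub]
        rfl
      have hzb : Aq i ⬝ᵥ zq ≤ (b i : ℚ) := by
        rw [hAzi]
        exact_mod_cast hz i
      rw [hxsplit]
      linarith
    · -- ε i = -1 : B i = -Aq i
      have hBi : ∀ v, B i ⬝ᵥ v = -(Aq i ⬝ᵥ v) := by
        intro v
        rw [hBdot, hε]
        simp [hεi]
      have hneg : Aq i ⬝ᵥ (fun j => y j - w j) ≤ 0 := by
        rw [hAqyw]
        apply Finset.sum_nonpos
        intro t _
        apply mul_nonpos_of_nonneg_of_nonpos (hfr0 t)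
        have := hgc t i
        rw [hBi] at this
        linarith
      have hxsplit : Aq i ⬝ᵥ x = Aq i ⬝ᵥ r + Aq i ⬝ᵥ (fun j => y j - w j) := by
        rw [← dotProduct_add]
        congr 1
        funext j
        show (z j : ℚ) - w j = r j + (((z j : ℚ) - r j) - w j)
        ring
      have hrb : Aq i ⬝ᵥ r ≤ (b i : ℚ) := hr i
      rw [hxsplit]
      linarith
  -- back to ℤ
  refine ⟨zstar, ?_, ?_⟩
  · intro i
    have h1 : ((A.mulVec zstar i : ℤ) : ℚ) = Aq i ⬝ᵥ x := by
      have : Aq i ⬝ᵥ x = Aq i ⬝ᵥ (fun j => ((zstar j : ℤ) : ℚ)) := by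
        congr 1
        exact funext hxz
      rw [this]
      simp [hAq, Matrix.mulVec, dotProduct]
    have := hfeasq i
    rw [← h1] at this
    exact_mod_cast this
  · intro j
    have h1 : (zstar j : ℚ) - r j = y j - w j := by
      rw [← hxz j, hx, hy]
      ring
    rw [h1, hywfr j]
    have h2 : |∑ t, fr t * g t j| ≤ ∑ t, |fr t * g t j| :=
      Finset.abs_sum_le_sum_abs _ _
    have h3 : ∀ t, |fr t * g t j| ≤ (Δ:ℚ) := by
      intro t
      rw [abs_mul]
      have ha : |fr t| ≤ 1 := by
        rw [abs_of_nonneg (hfr0 t)]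
        exact hfr1 t
      calc |fr t| * |g t j| ≤ 1 * (Δ:ℚ) :=
            mul_le_mul ha (hgb t j) (abs_nonneg _) zero_le_one
        _ = (Δ:ℚ) := one_mul _
    have h4 : ∑ t, |fr t * g t j| ≤ (m : ℚ) * (Δ:ℚ) := by
      calc ∑ t, |fr t * g t j| ≤ ∑ _t : Fin m, (Δ:ℚ) := Finset.sum_le_sum fun t _ => h3 t
        _ = (m : ℚ) * (Δ:ℚ) := by
            rw [Finset.sum_const, Finset.card_univ, Fintype.card_fin, nsmul_eq_mul]
    have h5 : (m : ℚ) * (Δ:ℚ) ≤ (n : ℚ) * (Δ:ℚ) := by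
      apply mul_le_mul_of_nonneg_right _ hΔq0
      exact_mod_cast hmn
    linarith
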